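/- Define L_M(t) = ∫_0^1 L_D(xt) dx where L_D(t) = log((e^t - 1)/t). Then L_M'(t) = (L_D(t) - L_M(t))/t for all t ≠ 0, and L_M''(t) > 0 for all t > 0, so that for every x in (1/4, 1/2) there exists a unique t_x > 0 with L_M'(t_x) = x. -/

import Mathlib

open Set

noncomputable def L_D (t : ℝ) : ℝ := Real.log ((Real.exp t - 1) / t)

noncomputable def L_M (t : ℝ) : ℝ := ∫ x in (0:ℝ)..1, L_D (x * t)

open Real Filter Topology intervalIntegral MeasureTheory in
noncomputable def FF (t : ℝ) : ℝ := ∫ s in (0:ℝ)..t, L_D s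

section Aux
open Real Filter Topology intervalIntegral MeasureTheory

lemma ratio_pos {t : ℝ} (ht : t ≠ 0) : 0 < (Real.exp t - 1) / t := by
  rcases ht.lt_or_gt with h | h
  · apply div_pos_of_neg_of_neg _ h
    simpa using Real.exp_lt_one_iff.2 h
  · refine div_pos ?_ h
    have : (1:ℝ) < Real.exp t := by rw [← Real.exp_zero]; exact Real.exp_lt_exp.2 h
    linarith

lemma exp_sub_one_pos {t : ℝ} (ht : 0 < t) : 0 < Real.exp t - 1 := by
  have : (1:ℝ) < Real.exp t := by rw [← Real.exp_zero]; exact Real.exp_lt_exp.2 ht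
  linarith

lemma tendsto_ratio : Tendsto (fun t => (Real.exp t - 1) / t) (𝓝[≠] (0:ℝ)) (𝓝 1) := by
  have h := hasDerivAt_iff_tendsto_slope.1 (Real.hasDerivAt_exp 0)
  rw [Real.exp_zero] at h
  refine h.congr (fun t => ?_)
  simp [slope_def_field]

lemma L_D_zero : L_D 0 = 0 := by simp [L_D]

lemma contLD : Continuous L_D := by
  rw [continuous_iff_continuousAt]
  intro t
  rcases eq_or_ne t 0 with rfl | ht
  · rw [ContinuousAt, L_D_zero]
    nth_rewrite 1 [← nhdsNE_sup_pure (0:ℝ)]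
    rw [tendsto_sup]
    constructor
    · have : Tendsto (fun t => Real.log ((Real.exp t - 1)/t)) (𝓝[≠] (0:ℝ)) (𝓝 (Real.log 1)) :=
        (Real.continuousAt_log one_ne_zero).tendsto.comp tendsto_ratio
      rw [Real.log_one] at this; exact this
    · simpa [L_D_zero] using tendsto_pure_nhds L_D (0:ℝ)
  · have hpos := ratio_pos ht
    have : ContinuousAt (fun t => (Real.exp t - 1)/t) t :=
      ((Real.continuous_exp.sub continuous_const).continuousAt).div continuousAt_id ht
    exact this.log hpos.ne'

lemma hFF (t : ℝ) : HasDerivAt FF (L_D t) t :=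
  intervalIntegral.integral_hasDerivAt_right (contLD.intervalIntegrable _ _)
    (contLD.stronglyMeasurableAtFilter _ _) contLD.continuousAt

lemma L_M_eq {t : ℝ} (ht : t ≠ 0) : L_M t = FF t / t := by
  rw [L_M, intervalIntegral.integral_comp_mul_right L_D ht]
  simp [FF, smul_eq_mul, inv_mul_eq_div]

lemma hLD {t : ℝ} (ht : t ≠ 0) :
    HasDerivAt L_D (Real.exp t / (Real.exp t - 1) - 1 / t) t := by
  have hne : Real.exp t - 1 ≠ 0 := by
    rcases ht.lt_or_gt with h | h
    · have : Real.exp t < 1 := Real.exp_lt_one_iff.2 h; linarith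
    · exact (exp_sub_one_pos h).ne'
  have h1 : HasDerivAt (fun t => (Real.exp t - 1) / t)
      ((Real.exp t * t - (Real.exp t - 1) * 1) / t ^ 2) t :=
    ((Real.hasDerivAt_exp t).sub_const 1).div (hasDerivAt_id t) ht
  have h2 := h1.log (ratio_pos ht).ne'
  change HasDerivAt (fun y => Real.log ((Real.exp y - 1) / y)) _ t
  convert h2 using 1
  field_simp

lemma hLM_deriv {t : ℝ} (ht : t ≠ 0) :
    HasDerivAt L_M ((L_D t - L_M t) / t) t := by
  have h1 : HasDerivAt (fun s => FF s / s) ((L_D t * t - FF t * 1) / t ^ 2) t :=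
    (hFF t).div (hasDerivAt_id t) ht
  have heq : (fun s => FF s / s) =ᶠ[𝓝 t] L_M := by
    filter_upwards [isOpen_compl_singleton.mem_nhds ht] with s hs
    exact (L_M_eq hs).symm
  have h3 := h1.congr_of_eventuallyEq heq.symm
  refine h3.congr_deriv ?_
  rw [L_M_eq ht, div_eq_div_iff (pow_ne_zero 2 ht) ht]
  field_simp

noncomputable def GG (t : ℝ) : ℝ :=
  t ^ 2 * (Real.exp t / (Real.exp t - 1)) - t - 2 * t * L_D t + 2 * FF t

lemma hderiv2 {t : ℝ} (ht : 0 < t) :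
    HasDerivAt (deriv L_M) (GG t / t ^ 3) t := by
  have ht' : t ≠ 0 := ht.ne'
  have hN : HasDerivAt (fun s => s * L_D s - FF s)
      ((1 * L_D t + t * (Real.exp t / (Real.exp t - 1) - 1 / t)) - L_D t) t :=
    ((hasDerivAt_id t).mul (hLD ht')).sub (hFF t)
  have hphi : HasDerivAt (fun s => (s * L_D s - FF s) / s ^ 2)
      ((((1 * L_D t + t * (Real.exp t / (Real.exp t - 1) - 1 / t)) - L_D t) * t ^ 2
        - (t * L_D t - FF t) * (↑2 * t ^ 1)) / (t ^ 2) ^ 2) t :=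
    hN.div (hasDerivAt_pow 2 t) (pow_ne_zero 2 ht')
  have heq : (fun s => (s * L_D s - FF s) / s ^ 2) =ᶠ[𝓝 t] deriv L_M := by
    filter_upwards [isOpen_compl_singleton.mem_nhds ht'] with s hs
    have hs' : s ≠ 0 := hs
    rw [(hLM_deriv hs').deriv, L_M_eq hs', div_eq_div_iff (pow_ne_zero 2 hs') hs']
    field_simp
  have h3 := hphi.congr_of_eventuallyEq heq.symm
  refine h3.congr_deriv ?_
  have hne : Real.exp t - 1 ≠ 0 := (exp_sub_one_pos ht).ne'
  rw [GG, div_eq_div_iff (by positivity) (pow_ne_zero 3 ht')]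
  field_simp
  ring

lemma hGG_deriv {t : ℝ} (ht : 0 < t) :
    HasDerivAt GG (1 - t ^ 2 * Real.exp t / (Real.exp t - 1) ^ 2) t := by
  have ht' : t ≠ 0 := ht.ne'
  have hne : Real.exp t - 1 ≠ 0 := (exp_sub_one_pos ht).ne'
  have hA : HasDerivAt (fun s => s ^ 2 * (Real.exp s / (Real.exp s - 1)))
      ((↑2 * t ^ 1) * (Real.exp t / (Real.exp t - 1))
        + t ^ 2 * ((Real.exp t * (Real.exp t - 1) - Real.exp t * Real.exp t) / (Real.exp t - 1) ^ 2)) t :=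
    (hasDerivAt_pow 2 t).mul ((Real.hasDerivAt_exp t).div ((Real.hasDerivAt_exp t).sub_const 1) hne)
  have hC : HasDerivAt (fun s => 2 * s * L_D s)
      (2 * 1 * L_D t + 2 * t * (Real.exp t / (Real.exp t - 1) - 1 / t)) t := by
    have := ((hasDerivAt_id t).const_mul 2).mul (hLD ht')
    exact this
  have h := ((hA.sub (hasDerivAt_id t)).sub hC).add ((hFF t).const_mul 2)
  refine h.congr_deriv ?_
  field_simp
  ring

lemma GG_deriv_pos {t : ℝ} (ht : 0 < t) :
    0 < 1 - t ^ 2 * Real.exp t / (Real.exp t - 1) ^ 2 := by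
  have hD := exp_sub_one_pos ht
  have hs : t / 2 < Real.sinh (t / 2) := Real.self_lt_sinh_iff.2 (by linarith)
  have hprod : Real.exp (t / 2) * Real.exp (t / 2) = Real.exp t := by
    rw [← Real.exp_add]; ring_nf
  have hsinh : Real.exp t - 1 = 2 * Real.sinh (t / 2) * Real.exp (t / 2) := by
    rw [Real.sinh_eq]
    have h2 : Real.exp (t / 2) * Real.exp (-(t / 2)) = 1 := by
      rw [← Real.exp_add]; simp
    nlinarith [hprod, h2]
  have hkey : t ^ 2 * Real.exp t < (Real.exp t - 1) ^ 2 := by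
    rw [hsinh]
    have he := Real.exp_pos (t / 2)
    have hs0 : 0 < Real.sinh (t / 2) := lt_trans (by linarith) hs
    have ht2 : t ^ 2 < (2 * Real.sinh (t / 2)) ^ 2 := by nlinarith
    have hsq : (2 * Real.sinh (t / 2) * Real.exp (t / 2)) ^ 2
        = (2 * Real.sinh (t / 2)) ^ 2 * Real.exp t := by rw [← hprod]; ring
    rw [hsq]
    nlinarith [Real.exp_pos t]
  rw [sub_pos, div_lt_one (by positivity)]
  exact hkey

lemma contFF : Continuous FF := by
  rw [continuous_iff_continuousAt]; exact fun t => (hFF t).continuousAt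

lemma GG_cont : ContinuousOn GG (Ici 0) := by
  have h1 : ContinuousOn (fun t : ℝ => t ^ 2 * (Real.exp t / (Real.exp t - 1))) (Ici 0) := by
    intro t ht
    rcases eq_or_lt_of_le (mem_Ici.1 ht) with h | h
    · -- t = 0
      subst h
      rw [ContinuousWithinAt, ← Ioi_insert, nhdsWithin_insert, tendsto_sup]
      refine ⟨tendsto_pure_nhds _ _, ?_⟩
      have hval : (0:ℝ) ^ 2 * (Real.exp 0 / (Real.exp 0 - 1)) = 0 := by norm_num
      rw [hval]
      have hinv : Tendsto (fun t : ℝ => t / (Real.exp t - 1)) (𝓝[>] (0:ℝ)) (𝓝 1) := by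
        have := (tendsto_ratio.mono_left
          (nhdsWithin_mono 0 (fun x hx => ne_of_gt hx))).inv₀ one_ne_zero
        simp only [inv_div, inv_one] at this
        exact this
      have hmul : Tendsto (fun t : ℝ => (t * Real.exp t) * (t / (Real.exp t - 1)))
          (𝓝[>] (0:ℝ)) (𝓝 0) := by
        have h1 : Tendsto (fun t : ℝ => t * Real.exp t) (𝓝[>] (0:ℝ)) (𝓝 0) := by
          have := (continuous_id.mul Real.continuous_exp).tendsto 0
          have h2 : Tendsto (fun t : ℝ => t * Real.exp t) (𝓝[>] (0:ℝ)) (𝓝 ((0:ℝ) * Real.exp 0)) :=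
            this.mono_left nhdsWithin_le_nhds
          simpa using h2
        simpa using h1.mul hinv
      refine hmul.congr' ?_
      filter_upwards [self_mem_nhdsWithin] with t (ht : 0 < t)
      field_simp
    · exact (((continuous_pow 2).continuousAt.mul
        ((Real.continuous_exp.continuousAt).div
          ((Real.continuous_exp.sub continuous_const).continuousAt)
          (exp_sub_one_pos h).ne')).continuousWithinAt)
  exact ((h1.sub continuousOn_id).sub
      (((continuous_const.mul continuous_id).mul contLD).continuousOn)).add
    ((continuous_const.mul contFF).continuousOn)

lemma GG_pos {t : ℝ} (ht : 0 < t) : 0 < GG t := by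
  have hmono : StrictMonoOn GG (Ici 0) := by
    refine strictMonoOn_of_deriv_pos (convex_Ici 0) GG_cont (fun s hs => ?_)
    rw [interior_Ici] at hs
    rw [(hGG_deriv hs).deriv]
    exact GG_deriv_pos hs
  have h0 : GG 0 = 0 := by simp [GG, FF, L_D_zero]
  have := hmono (self_mem_Ici) (mem_Ici.2 ht.le) ht
  rwa [h0] at this

lemma part2 {t : ℝ} (ht : 0 < t) : 0 < deriv (deriv L_M) t := by
  rw [(hderiv2 ht).deriv]
  exact div_pos (GG_pos ht) (by positivity)

lemma gmono : StrictMonoOn (deriv L_M) (Ioi 0) := by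
  refine strictMonoOn_of_deriv_pos (convex_Ioi 0) (fun t ht => ?_) (fun t ht => ?_)
  · exact (hderiv2 ht).continuousAt.continuousWithinAt
  · rw [interior_Ioi] at ht; exact part2 ht

lemma LDprime_bound {t : ℝ} (ht : 0 < t) (ht1 : t ≤ 1) :
    |Real.exp t / (Real.exp t - 1) - 1 / t - 1 / 2| ≤ t / 2 := by
  have hD := exp_sub_one_pos ht
  set r : ℝ := Real.exp t - (1 + t + t ^ 2 / 2) with hrdef
  have habs : |t| ≤ 1 := by rw [abs_of_pos ht]; exact ht1
  have hr : |r| ≤ 2 / 9 * t ^ 3 := by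
    have h := Real.exp_bound habs (n := 3) (by norm_num)
    have hsum : ∑ m ∈ Finset.range 3, t ^ m / m.factorial = 1 + t + t ^ 2 / 2 := by
      norm_num [Finset.sum_range_succ]
    rw [hsum] at h
    calc |r| ≤ |t| ^ 3 * (Nat.succ 3 / ((Nat.factorial 3 : ℝ) * 3)) := h
      _ = 2 / 9 * t ^ 3 := by
          rw [abs_of_pos ht]
          norm_num [Nat.factorial]
          ring
  have hE : Real.exp t = 1 + t + t ^ 2 / 2 + r := by rw [hrdef]; ring
  have hkey : Real.exp t / (Real.exp t - 1) - 1 / t - 1 / 2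
      = (t ^ 3 / 4 + (t / 2 - 1) * r) / (t * (Real.exp t - 1)) := by
    rw [eq_div_iff (by positivity : t * (Real.exp t - 1) ≠ 0)]
    field_simp
    rw [hE]
    ring
  rw [hkey, abs_div]
  have hden : t ^ 2 ≤ |t * (Real.exp t - 1)| := by
    rw [abs_of_pos (by positivity)]
    have : t ≤ Real.exp t - 1 := by nlinarith [Real.add_one_le_exp t]
    nlinarith
  have hnum : |t ^ 3 / 4 + (t / 2 - 1) * r| ≤ t ^ 3 / 2 := by
    have h1 : |(t / 2 - 1) * r| ≤ 2 / 9 * t ^ 3 := by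
      rw [abs_mul]
      have h2 : |t / 2 - 1| ≤ 1 := by rw [abs_le]; constructor <;> linarith
      calc |t / 2 - 1| * |r| ≤ 1 * (2 / 9 * t ^ 3) := by
            apply mul_le_mul h2 hr (abs_nonneg _) zero_le_one
        _ = 2 / 9 * t ^ 3 := one_mul _
    calc |t ^ 3 / 4 + (t / 2 - 1) * r| ≤ |t ^ 3 / 4| + |(t / 2 - 1) * r| := abs_add_le _ _
      _ ≤ t ^ 3 / 4 + 2 / 9 * t ^ 3 := by
          rw [abs_of_pos (by positivity)]; linarith
      _ ≤ t ^ 3 / 2 := by nlinarith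
  calc |t ^ 3 / 4 + (t / 2 - 1) * r| / |t * (Real.exp t - 1)|
      ≤ (t ^ 3 / 2) / t ^ 2 := by
        apply div_le_div₀ (by positivity) hnum (by positivity) hden
    _ = t / 2 := by field_simp

lemma tendsto_LDprime :
    Tendsto (fun t => Real.exp t / (Real.exp t - 1) - 1 / t) (𝓝[>] (0:ℝ)) (𝓝 (1 / 2)) := by
  rw [← tendsto_sub_nhds_zero_iff]
  apply squeeze_zero_norm' (a := fun t => t / 2)
  · filter_upwards [Ioc_mem_nhdsGT_of_mem (by norm_num : (0:ℝ) ∈ Ico 0 1)] with t ht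
    exact LDprime_bound ht.1 ht.2
  · have : Tendsto (fun t : ℝ => t / 2) (𝓝 (0:ℝ)) (𝓝 (0 / 2)) :=
      (continuous_id.div_const 2).tendsto 0
    simpa using this.mono_left nhdsWithin_le_nhds

lemma tendsto_g_zero : Tendsto (deriv L_M) (𝓝[>] (0:ℝ)) (𝓝 (1 / 4)) := by
  have key : Tendsto (fun t => (t * L_D t - FF t) / t ^ 2) (𝓝[>] (0:ℝ)) (𝓝 (1 / 4)) := by
    apply HasDerivAt.lhopital_zero_nhdsGT
      (f' := fun t => t * (Real.exp t / (Real.exp t - 1) - 1 / t))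
      (g' := fun t => 2 * t)
    · filter_upwards [self_mem_nhdsWithin] with t (ht : 0 < t)
      have h := ((hasDerivAt_id t).mul (hLD ht.ne')).sub (hFF t)
      refine h.congr_deriv ?_
      simp only [id_eq]
      ring
    · filter_upwards [self_mem_nhdsWithin] with t (ht : 0 < t)
      have h := hasDerivAt_pow 2 t
      refine h.congr_deriv ?_
      push_cast
      ring
    · filter_upwards [self_mem_nhdsWithin] with t (ht : 0 < t)
      positivity
    · have hc : Continuous (fun t => t * L_D t - FF t) :=
        (continuous_id.mul contLD).sub contFF
      have := (hc.tendsto 0).mono_left (nhdsWithin_le_nhds (s := Ioi (0:ℝ)))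
      simpa [L_D_zero, FF] using this
    · have := ((continuous_pow 2).tendsto (0:ℝ)).mono_left (nhdsWithin_le_nhds (s := Ioi (0:ℝ)))
      simpa using this
    · have h2 := tendsto_LDprime.div_const 2
      have : (1:ℝ) / 2 / 2 = 1 / 4 := by norm_num
      rw [this] at h2
      refine h2.congr' ?_
      filter_upwards [self_mem_nhdsWithin] with t (ht : 0 < t)
      rw [eq_div_iff (by positivity : 2 * t ≠ 0)]
      ring
  refine key.congr' ?_
  filter_upwards [self_mem_nhdsWithin] with t (ht : 0 < t)
  rw [(hLM_deriv ht.ne').deriv, L_M_eq ht.ne']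
  rw [div_eq_div_iff (pow_ne_zero 2 ht.ne') ht.ne']
  field_simp

noncomputable def c1 : ℝ := Real.log (1 - Real.exp (-1))

lemma one_sub_exp_neg_pos : 0 < 1 - Real.exp (-1) := by
  have : Real.exp (-1) < 1 := Real.exp_lt_one_iff.2 (by norm_num)
  linarith

lemma LD_upper {t : ℝ} (ht : 0 < t) : L_D t ≤ t - Real.log t := by
  have h1 : (Real.exp t - 1) / t ≤ Real.exp t / t := by
    apply div_le_div_of_nonneg_right ?_ ht.le
    linarith
  calc L_D t ≤ Real.log (Real.exp t / t) := Real.log_le_log (ratio_pos ht.ne') h1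
    _ = t - Real.log t := by
        rw [Real.log_div (Real.exp_ne_zero t) ht.ne', Real.log_exp]

lemma LD_lower {t : ℝ} (ht : 1 ≤ t) : t - Real.log t + c1 ≤ L_D t := by
  have ht0 : 0 < t := lt_of_lt_of_le one_pos ht
  have h1 : Real.exp t * (1 - Real.exp (-1)) / t ≤ (Real.exp t - 1) / t := by
    apply div_le_div_of_nonneg_right ?_ ht0.le
    have h2 : Real.exp t * Real.exp (-1) = Real.exp (t - 1) := by
      rw [← Real.exp_add]; ring_nf
    have h3 : (1:ℝ) ≤ Real.exp (t - 1) := Real.one_le_exp (by linarith)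
    nlinarith
  have hq := one_sub_exp_neg_pos
  have hp : 0 < Real.exp t * (1 - Real.exp (-1)) := by positivity
  have h4 : Real.log (Real.exp t * (1 - Real.exp (-1)) / t) = t + c1 - Real.log t := by
    rw [Real.log_div hp.ne' ht0.ne',
      Real.log_mul (Real.exp_ne_zero t) one_sub_exp_neg_pos.ne', Real.log_exp, c1]
  calc t - Real.log t + c1 = Real.log (Real.exp t * (1 - Real.exp (-1)) / t) := by rw [h4]; ring
    _ ≤ L_D t := Real.log_le_log (div_pos hp ht0) h1

lemma zero_not_mem {t : ℝ} (ht : 1 ≤ t) : (0:ℝ) ∉ Set.uIcc 1 t := by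
  rw [uIcc_of_le ht]
  intro h
  exact absurd h.1 (by norm_num)

lemma intSub {t : ℝ} (ht : 1 ≤ t) :
    IntervalIntegrable (fun s => s - Real.log s + c1) volume 1 t := by
  have hc : ContinuousOn (fun s : ℝ => s - Real.log s + c1) (Set.uIcc 1 t) := by
    refine ((continuousOn_id.sub (Real.continuousOn_log.mono ?_)).add continuousOn_const)
    intro s hs
    exact fun h => (zero_not_mem ht) (h ▸ hs)
  exact hc.intervalIntegrable

lemma intSub' {t : ℝ} (ht : 1 ≤ t) :
    IntervalIntegrable (fun s => s - Real.log s) volume 1 t := by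
  have := (intSub ht).sub (_root_.intervalIntegrable_const (c := c1))
  simpa using this

lemma FF_split (t : ℝ) : FF t = FF 1 + ∫ s in (1:ℝ)..t, L_D s := by
  rw [FF, FF]
  rw [← intervalIntegral.integral_add_adjacent_intervals
    (contLD.intervalIntegrable 0 1) (contLD.intervalIntegrable 1 t)]

lemma int_upper_val {t : ℝ} (ht : 1 ≤ t) :
    (∫ s in (1:ℝ)..t, (s - Real.log s)) = t ^ 2 / 2 - 1 / 2 - t * Real.log t + t - 1 := by
  rw [intervalIntegral.integral_sub intervalIntegral.intervalIntegrable_id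
    (intervalIntegrable_log (zero_not_mem ht)), integral_id, integral_log]
  simp only [Real.log_one]
  ring

lemma int_lower_val {t : ℝ} (ht : 1 ≤ t) :
    (∫ s in (1:ℝ)..t, (s - Real.log s + c1))
      = t ^ 2 / 2 - 1 / 2 - t * Real.log t + t - 1 + c1 * (t - 1) := by
  rw [intervalIntegral.integral_add (intSub' ht) _root_.intervalIntegrable_const,
    int_upper_val ht, intervalIntegral.integral_const]
  simp [smul_eq_mul]
  ring

lemma FF_upper {t : ℝ} (ht : 1 ≤ t) :
    FF t ≤ FF 1 + (t ^ 2 / 2 - 1 / 2 - t * Real.log t + t - 1) := by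
  rw [FF_split t, ← int_upper_val ht]
  gcongr
  refine intervalIntegral.integral_mono_on ht (contLD.intervalIntegrable 1 t) (intSub' ht) ?_
  intro s hs
  exact LD_upper (lt_of_lt_of_le one_pos hs.1)

lemma FF_lower {t : ℝ} (ht : 1 ≤ t) :
    FF 1 + (t ^ 2 / 2 - 1 / 2 - t * Real.log t + t - 1 + c1 * (t - 1)) ≤ FF t := by
  rw [FF_split t, ← int_lower_val ht]
  refine add_le_add_right (α := ℝ) ?_ _
  refine intervalIntegral.integral_mono_on ht (intSub ht) (contLD.intervalIntegrable 1 t) ?_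
  intro s hs
  exact LD_lower hs.1

lemma gg_eq {t : ℝ} (ht : t ≠ 0) : deriv L_M t = (t * L_D t - FF t) / t ^ 2 := by
  rw [(hLM_deriv ht).deriv, L_M_eq ht, div_eq_div_iff ht (pow_ne_zero 2 ht)]
  field_simp

lemma tendsto_g_top : Tendsto (deriv L_M) atTop (𝓝 (1 / 2)) := by
  have hlow : ∀ t : ℝ, 1 ≤ t →
      1 / 2 + (c1 - 1) / t + (3 / 2 - FF 1) / t ^ 2 ≤ deriv L_M t := by
    intro t ht
    have ht0 : (0:ℝ) < t := lt_of_lt_of_le one_pos ht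
    rw [gg_eq ht0.ne', le_div_iff₀ (by positivity : (0:ℝ) < t ^ 2)]
    have h1 := LD_lower ht
    have h2 := FF_upper ht
    have h3 : t * (t - Real.log t + c1) ≤ t * L_D t :=
      mul_le_mul_of_nonneg_left h1 ht0.le
    have hexp : (1 / 2 + (c1 - 1) / t + (3 / 2 - FF 1) / t ^ 2) * t ^ 2
        = t ^ 2 / 2 + (c1 - 1) * t + (3 / 2 - FF 1) := by
      field_simp
    rw [hexp]
    linarith [h3, h2]
  have hhigh : ∀ t : ℝ, 1 ≤ t →
      deriv L_M t ≤ 1 / 2 + (-1 - c1) / t + (3 / 2 + c1 - FF 1) / t ^ 2 := by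
    intro t ht
    have ht0 : (0:ℝ) < t := lt_of_lt_of_le one_pos ht
    rw [gg_eq ht0.ne', div_le_iff₀ (by positivity : (0:ℝ) < t ^ 2)]
    have h1 := LD_upper ht0
    have h2 := FF_lower ht
    have h3 : t * L_D t ≤ t * (t - Real.log t) :=
      mul_le_mul_of_nonneg_left h1 ht0.le
    have hexp : (1 / 2 + (-1 - c1) / t + (3 / 2 + c1 - FF 1) / t ^ 2) * t ^ 2
        = t ^ 2 / 2 + (-1 - c1) * t + (3 / 2 + c1 - FF 1) := by
      field_simp
    rw [hexp]
    linarith [h3, h2]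
  have hl : Tendsto (fun t : ℝ => 1 / 2 + (c1 - 1) / t + (3 / 2 - FF 1) / t ^ 2)
      atTop (𝓝 (1 / 2)) := by
    have a1 : Tendsto (fun t : ℝ => (c1 - 1) / t) atTop (𝓝 0) :=
      tendsto_const_nhds.div_atTop tendsto_id
    have a2 : Tendsto (fun t : ℝ => (3 / 2 - FF 1) / t ^ 2) atTop (𝓝 0) :=
      tendsto_const_nhds.div_atTop (tendsto_pow_atTop two_ne_zero)
    have := ((tendsto_const_nhds (x := (1:ℝ)/2)).add a1).add a2
    simpa using this
  have hh : Tendsto (fun t : ℝ => 1 / 2 + (-1 - c1) / t + (3 / 2 + c1 - FF 1) / t ^ 2)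
      atTop (𝓝 (1 / 2)) := by
    have a1 : Tendsto (fun t : ℝ => (-1 - c1) / t) atTop (𝓝 0) :=
      tendsto_const_nhds.div_atTop tendsto_id
    have a2 : Tendsto (fun t : ℝ => (3 / 2 + c1 - FF 1) / t ^ 2) atTop (𝓝 0) :=
      tendsto_const_nhds.div_atTop (tendsto_pow_atTop two_ne_zero)
    have := ((tendsto_const_nhds (x := (1:ℝ)/2)).add a1).add a2
    simpa using this
  refine tendsto_of_tendsto_of_tendsto_of_le_of_le' hl hh ?_ ?_
  · filter_upwards [eventually_ge_atTop (1:ℝ)] with t ht using hlow t ht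
  · filter_upwards [eventually_ge_atTop (1:ℝ)] with t ht using hhigh t ht

lemma part3 {x : ℝ} (hx : x ∈ Set.Ioo (1 / 4 : ℝ) (1 / 2)) :
    ∃! t : ℝ, 0 < t ∧ deriv L_M t = x := by
  obtain ⟨a, ha, ha0⟩ : ∃ a, deriv L_M a < x ∧ 0 < a := by
    have h1 : ∀ᶠ t in 𝓝[>] (0:ℝ), deriv L_M t < x := tendsto_g_zero.eventually_lt_const hx.1
    exact (h1.and self_mem_nhdsWithin).exists
  obtain ⟨b, hb, hab⟩ : ∃ b, x < deriv L_M b ∧ a ≤ b := by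
    have h1 : ∀ᶠ t in atTop, x < deriv L_M t := tendsto_g_top.eventually_const_lt hx.2
    exact (h1.and (eventually_ge_atTop a)).exists
  have hcont : ContinuousOn (deriv L_M) (Icc a b) := by
    intro s hs
    exact (hderiv2 (lt_of_lt_of_le ha0 hs.1)).continuousAt.continuousWithinAt
  have hx' : x ∈ Icc (deriv L_M a) (deriv L_M b) := ⟨ha.le, hb.le⟩
  obtain ⟨t, htm, htx⟩ := intermediate_value_Icc hab hcont hx'
  have ht0 : 0 < t := lt_of_lt_of_le ha0 htm.1
  refine ⟨t, ⟨ht0, htx⟩, ?_⟩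
  rintro y ⟨hy0, hyx⟩
  exact gmono.injOn (mem_Ioi.2 hy0) (mem_Ioi.2 ht0) (hyx.trans htx.symm)

end Aux

theorem L_M_properties :
    (∀ t : ℝ, t ≠ 0 → deriv L_M t = (L_D t - L_M t) / t) ∧
    (∀ t : ℝ, 0 < t → 0 < deriv (deriv L_M) t) ∧
    (∀ x : ℝ, x ∈ Set.Ioo (1 / 4 : ℝ) (1 / 2) →
      ∃! t : ℝ, 0 < t ∧ deriv L_M t = x) := by
  exact ⟨fun t ht => (hLM_deriv ht).deriv, fun t ht => part2 ht, fun x hx => part3 hx⟩
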